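/- Suppose (⊛^Da) holds: every f : ℝ × ℝ → ℝ admits a representation f(x,y) = Σ_{n<ω} g⁰ₙ(x)·g¹ₙ(y) (pointwise convergent series) for some functions g⁰ₙ, g¹ₙ : ℝ → ℝ. Then every subset A of ℝ × ℝ belongs to the σ-algebra generated by the rectangles; in fact A ∈ ℬ_ω(ℛ₂). -/

import Mathlib

open Set TopologicalSpace

/-- The finite levels `ℬ_n(ℛ₂)` of the hierarchy generated by rectangles in `ℝ × ℝ`:
level `0` consists of rectangles and their complements; level `n+1` consists of
countable unions of level-`n` sets and complements of such unions. -/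
def RectHierarchy : ℕ → Set (Set (ℝ × ℝ))
  | 0 => { S | ∃ A B : Set ℝ, S = A ×ˢ B ∨ S = (A ×ˢ B)ᶜ }
  | n + 1 => { S | ∃ g : ℕ → Set (ℝ × ℝ), (∀ k, g k ∈ RectHierarchy n) ∧
      (S = ⋃ k, g k ∨ S = (⋃ k, g k)ᶜ) }

lemma rectHierarchy_compl {n : ℕ} {S : Set (ℝ × ℝ)} (h : S ∈ RectHierarchy n) :
    Sᶜ ∈ RectHierarchy n := by
  cases n with
  | zero =>
    obtain ⟨A, B, h | h⟩ := h
    · exact ⟨A, B, Or.inr (by rw [h])⟩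
    · exact ⟨A, B, Or.inl (by rw [h, compl_compl])⟩
  | succ n =>
    obtain ⟨g, hg, h | h⟩ := h
    · exact ⟨g, hg, Or.inr (by rw [h])⟩
    · exact ⟨g, hg, Or.inl (by rw [h, compl_compl])⟩

/-- An open condition on finitely many "separated" coordinates is a countable union
of rectangles. -/
lemma rect_open_preimage (M : ℕ) (φ ψ : ℝ → (Fin M → ℝ))
    (O : Set ((Fin M → ℝ) × (Fin M → ℝ))) (hO : IsOpen O) :
    ∃ A B : ℕ → Set ℝ,
      {p : ℝ × ℝ | (φ p.1, ψ p.2) ∈ O} = ⋃ k, (A k) ×ˢ (B k) := by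
  classical
  have hprod := (isBasis_countableBasis (Fin M → ℝ)).prod
    (isBasis_countableBasis (Fin M → ℝ))
  set T : Set (Set (Fin M → ℝ) × Set (Fin M → ℝ)) :=
    insert (∅, ∅) {st | st.1 ∈ countableBasis (Fin M → ℝ) ∧
      st.2 ∈ countableBasis (Fin M → ℝ) ∧ st.1 ×ˢ st.2 ⊆ O} with hT
  have hsub : {st : Set (Fin M → ℝ) × Set (Fin M → ℝ) |
      st.1 ∈ countableBasis (Fin M → ℝ) ∧
      st.2 ∈ countableBasis (Fin M → ℝ) ∧ st.1 ×ˢ st.2 ⊆ O}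
      ⊆ (countableBasis (Fin M → ℝ)) ×ˢ (countableBasis (Fin M → ℝ)) := by
    intro st hst
    exact ⟨hst.1, hst.2.1⟩
  have hTc : T.Countable :=
    Set.Countable.insert _
      (Set.Countable.mono hsub
        ((countable_countableBasis _).prod (countable_countableBasis _)))
  obtain ⟨f, hf⟩ := hTc.exists_eq_range ⟨_, mem_insert _ _⟩
  refine ⟨fun k => φ ⁻¹' (f k).1, fun k => ψ ⁻¹' (f k).2, ?_⟩
  ext p
  simp only [mem_setOf_eq, mem_iUnion, Set.mem_prod, mem_preimage]
  constructor
  · intro hp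
    obtain ⟨b, hb, hpb, hbO⟩ := hprod.exists_subset_of_mem_open hp hO
    obtain ⟨s, hs, t, ht, rfl⟩ := hb
    have hmem : (s, t) ∈ T := mem_insert_of_mem _ ⟨hs, ht, hbO⟩
    rw [hf] at hmem
    obtain ⟨k, hk⟩ := hmem
    have hpb' : (φ p.1, ψ p.2) ∈ (f k).1 ×ˢ (f k).2 := by
      rw [hk]; exact hpb
    exact ⟨k, hpb'.1, hpb'.2⟩
  · rintro ⟨k, h1, h2⟩
    have hmem : f k ∈ T := by rw [hf]; exact ⟨k, rfl⟩
    rcases hmem with heq | hmem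
    · rw [heq] at h1; exact absurd h1 (notMem_empty _)
    · exact hmem.2.2 ⟨h1, h2⟩

/-- The set where a finite sum of products exceeds `c` is at level 1. -/
lemma sum_gt_mem_level1 (g0 g1 : ℕ → ℝ → ℝ) (M : ℕ) (c : ℝ) :
    {p : ℝ × ℝ | c < ∑ n ∈ Finset.range M, g0 n p.1 * g1 n p.2}
      ∈ RectHierarchy 1 := by
  classical
  set φ : ℝ → (Fin M → ℝ) := fun x i => g0 i x
  set ψ : ℝ → (Fin M → ℝ) := fun y i => g1 i y
  set O : Set ((Fin M → ℝ) × (Fin M → ℝ)) :=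
    {uv | c < ∑ i : Fin M, uv.1 i * uv.2 i} with hOdef
  have hcont : Continuous fun uv : (Fin M → ℝ) × (Fin M → ℝ) =>
      ∑ i : Fin M, uv.1 i * uv.2 i := by
    apply continuous_finset_sum
    intro i _
    exact ((continuous_apply i).comp continuous_fst).mul
      ((continuous_apply i).comp continuous_snd)
  have hO : IsOpen O := isOpen_lt continuous_const hcont
  obtain ⟨A, B, hAB⟩ := rect_open_preimage M φ ψ O hO
  have hset : {p : ℝ × ℝ | c < ∑ n ∈ Finset.range M, g0 n p.1 * g1 n p.2}
      = {p : ℝ × ℝ | (φ p.1, ψ p.2) ∈ O} := by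
    ext p
    simp only [mem_setOf_eq, hOdef, φ, ψ]
    rw [Fin.sum_univ_eq_sum_range (fun n => g0 n p.1 * g1 n p.2) M]
  rw [hset, hAB]
  exact ⟨fun k => A k ×ˢ B k, fun k => ⟨A k, B k, Or.inl rfl⟩, Or.inl rfl⟩

theorem mem_rectHierarchy_of_Da
    (hDa : ∀ f : ℝ × ℝ → ℝ, ∃ g0 g1 : ℕ → ℝ → ℝ, ∀ x y : ℝ,
      Filter.Tendsto (fun N => ∑ n ∈ Finset.range N, g0 n x * g1 n y)
        Filter.atTop (nhds (f (x, y)))) :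
    ∀ A : Set (ℝ × ℝ), ∃ n : ℕ, A ∈ RectHierarchy n := by
  intro A
  classical
  obtain ⟨g0, g1, h⟩ := hDa (fun p => if p ∈ A then (1 : ℝ) else 0)
  set U : ℕ → Set (ℝ × ℝ) :=
    fun k => {p : ℝ × ℝ | (1 : ℝ)/2 < ∑ n ∈ Finset.range k, g0 n p.1 * g1 n p.2}
    with hU
  have hA : A = ⋃ N, ⋂ M, U (N + M) := by
    ext p
    simp only [mem_iUnion, mem_iInter, hU, mem_setOf_eq]
    constructor
    · intro hp
      have ht := h p.1 p.2
      simp only [Prod.mk.eta, if_pos hp] at ht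
      have hev : ∀ᶠ k in Filter.atTop,
          (1 : ℝ)/2 < ∑ n ∈ Finset.range k, g0 n p.1 * g1 n p.2 :=
        ht.eventually (eventually_gt_nhds (by norm_num))
      obtain ⟨N, hN⟩ := Filter.eventually_atTop.mp hev
      exact ⟨N, fun M => hN (N + M) (Nat.le_add_right N M)⟩
    · intro ⟨N, hN⟩
      by_contra hp
      have ht := h p.1 p.2
      simp only [Prod.mk.eta, if_neg hp] at ht
      have hev : ∀ᶠ k in Filter.atTop,
          ∑ n ∈ Finset.range k, g0 n p.1 * g1 n p.2 < (1 : ℝ)/2 :=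
        ht.eventually (eventually_lt_nhds (by norm_num))
      obtain ⟨N0, hN0⟩ := Filter.eventually_atTop.mp hev
      have h1 := hN N0
      have h2 := hN0 (N + N0) (Nat.le_add_left N0 N)
      linarith
  refine ⟨3, ?_⟩
  rw [hA]
  refine ⟨fun N => ⋂ M, U (N + M), fun N => ?_, Or.inl rfl⟩
  -- each `⋂ M, U (N + M)` is at level 2
  refine ⟨fun M => (U (N + M))ᶜ, fun M => rectHierarchy_compl ?_, Or.inr ?_⟩
  · exact sum_gt_mem_level1 g0 g1 (N + M) ((1 : ℝ)/2)
  · rw [compl_iUnion]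
    simp [compl_compl]
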